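/- arXiv:1910.02646 — 4 statements merged into one kernel-verified Lean document; each statement's English description precedes it below -/
import Mathlib

section
/- Let G, B : ℝⁿ → Matrix (Fin n) (Fin n) ℝ with G(x) symmetric positive definite and B(x) positive semidefinite for all x, and let Φ : ℝⁿ → ℝ be differentiable. Suppose x : ℝ → ℝⁿ is a twice-differentiable trajectory satisfying the geometric dynamical system G(x(t)) ẍ(t) + ξ_G(x(t), ẋ(t)) = -∇Φ(x(t)) - B(x(t), ẋ(t)) ẋ(t), where ξ_G(x, v) = (d/dt G(x(t)))v - (1/2)∇_x(vᵀG(x)v). Then the Lyapunov function V(t) = (1/2) ẋ(t)ᵀ G(x(t)) ẋ(t) + Φ(x(t)) satisfies V̇(t) = -ẋ(t)ᵀ B(x(t), ẋ(t)) ẋ(t) ≤ 0 for all t. -/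
open Matrix

/-- Lyapunov stability of a geometric dynamical system (GDS):
along a trajectory of `G(x)ẍ + ξ_G(x,ẋ) = -∇Φ(x) - B(x,ẋ)ẋ`, the energy
`V = ½ ẋᵀG(x)ẋ + Φ(x)` satisfies `V̇ = -ẋᵀB(x,ẋ)ẋ ≤ 0`. -/
theorem gds_lyapunov {n : ℕ}
    (G : (Fin n → ℝ) → Matrix (Fin n) (Fin n) ℝ)
    (B : (Fin n → ℝ) → (Fin n → ℝ) → Matrix (Fin n) (Fin n) ℝ)
    (Φ : (Fin n → ℝ) → ℝ)
    (gradΦ : (Fin n → ℝ) → (Fin n → ℝ))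
    (hGpd : ∀ y, (G y).PosDef)
    (hGdiff : ∀ i j, Differentiable ℝ (fun y => G y i j))
    (hB : ∀ y u, (B y u).PosSemidef)
    (hΦ : Differentiable ℝ Φ)
    (hgradΦ : ∀ y u, fderiv ℝ Φ y u = gradΦ y ⬝ᵥ u)
    (x v a : ℝ → (Fin n → ℝ))
    (hx : ∀ t, HasDerivAt x (v t) t)
    (hv : ∀ t, HasDerivAt v (a t) t)
    (ξ : ℝ → (Fin n → ℝ))
    -- ξ_G(x(t), ẋ(t)) = (d/dt G(x(t))) ẋ(t) - ½ ∇_x (ẋᵀ G(x) ẋ)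
    (hξ : ∀ t, ξ t =
      (Matrix.of fun i j => deriv (fun s => G (x s) i j) t) *ᵥ v t
        - (1 / 2 : ℝ) • (fun k => fderiv ℝ (fun y => v t ⬝ᵥ (G y *ᵥ v t)) (x t) (Pi.single k 1)))
    -- the GDS equation along the trajectory
    (hdyn : ∀ t, G (x t) *ᵥ a t + ξ t = -(gradΦ (x t)) - B (x t) (v t) *ᵥ v t) :
    ∀ t,
      HasDerivAt (fun s => (1 / 2 : ℝ) * (v s ⬝ᵥ (G (x s) *ᵥ v s)) + Φ (x s))
        (-(v t ⬝ᵥ (B (x t) (v t) *ᵥ v t))) t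
      ∧ -(v t ⬝ᵥ (B (x t) (v t) *ᵥ v t)) ≤ 0 := by
  intro t
  -- the matrix of directional derivatives of G along the trajectory
  set Gd : Matrix (Fin n) (Fin n) ℝ :=
    Matrix.of (fun i j => fderiv ℝ (fun y => G y i j) (x t) (v t)) with hGdDef
  -- component derivatives of v
  have hvi : ∀ i, HasDerivAt (fun s => v s i) (a t i) t := fun i =>
    (ContinuousLinearMap.proj (R := ℝ) (φ := fun _ : Fin n => ℝ) i).hasFDerivAt.comp_hasDerivAt t (hv t)
  -- derivative of entries of G along the trajectory
  have hGij : ∀ i j, HasDerivAt (fun s => G (x s) i j) (Gd i j) t := fun i j =>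
    ((hGdiff i j (x t)).hasFDerivAt).comp_hasDerivAt t (hx t)
  have hderivG : ∀ i j, deriv (fun s => G (x s) i j) t = Gd i j := fun i j => (hGij i j).deriv
  -- derivative of the quadratic form along the trajectory
  have hquad : HasDerivAt (fun s => v s ⬝ᵥ (G (x s) *ᵥ v s))
      (a t ⬝ᵥ (G (x t) *ᵥ v t) + v t ⬝ᵥ (Gd *ᵥ v t) + v t ⬝ᵥ (G (x t) *ᵥ a t)) t := by
    have hterm : ∀ i j, HasDerivAt (fun s => v s i * (G (x s) i j * v s j))
        (a t i * (G (x t) i j * v t j) + v t i * (Gd i j * v t j + G (x t) i j * a t j)) t :=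
      fun i j => (hvi i).mul ((hGij i j).mul (hvi j))
    have hsum : HasDerivAt (fun s => ∑ i, ∑ j, v s i * (G (x s) i j * v s j))
        (∑ i, ∑ j, (a t i * (G (x t) i j * v t j)
          + v t i * (Gd i j * v t j + G (x t) i j * a t j))) t :=
      HasDerivAt.fun_sum (fun i _ => HasDerivAt.fun_sum (fun j _ => hterm i j))
    have hfun : (fun s => ∑ i, ∑ j, v s i * (G (x s) i j * v s j))
        = fun s => v s ⬝ᵥ (G (x s) *ᵥ v s) := by
      funext s; simp [dotProduct, mulVec, Finset.mul_sum]
    have hval : (∑ i, ∑ j, (a t i * (G (x t) i j * v t j)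
          + v t i * (Gd i j * v t j + G (x t) i j * a t j)))
        = a t ⬝ᵥ (G (x t) *ᵥ v t) + v t ⬝ᵥ (Gd *ᵥ v t) + v t ⬝ᵥ (G (x t) *ᵥ a t) := by
      simp only [dotProduct, mulVec, Finset.mul_sum, ← Finset.sum_add_distrib]
      refine Finset.sum_congr rfl fun i _ => Finset.sum_congr rfl fun j _ => by ring
    rw [← hfun, ← hval]; exact hsum
  -- derivative of Φ along the trajectory
  have hPhi : HasDerivAt (fun s => Φ (x s)) (gradΦ (x t) ⬝ᵥ v t) t := by
    have := ((hΦ (x t)).hasFDerivAt).comp_hasDerivAt t (hx t)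
    rw [hgradΦ] at this; exact this
  -- the fderiv of the quadratic form in y
  have hF : HasFDerivAt (fun y => v t ⬝ᵥ (G y *ᵥ v t))
      (∑ i, ∑ j, (v t i * v t j) • fderiv ℝ (fun y => G y i j) (x t)) (x t) := by
    have hs : HasFDerivAt (fun y => ∑ i, ∑ j, (v t i * v t j) • G y i j)
        (∑ i, ∑ j, (v t i * v t j) • fderiv ℝ (fun y => G y i j) (x t)) (x t) :=
      HasFDerivAt.fun_sum (fun i _ => HasFDerivAt.fun_sum (fun j _ =>
        ((hGdiff i j (x t)).hasFDerivAt).const_smul (v t i * v t j)))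
    have hfun : (fun y => ∑ i, ∑ j, (v t i * v t j) • G y i j)
        = fun y => v t ⬝ᵥ (G y *ᵥ v t) := by
      funext y; simp [dotProduct, mulVec, Finset.mul_sum, smul_eq_mul]
      refine Finset.sum_congr rfl fun i _ => Finset.sum_congr rfl fun j _ => by ring
    rw [← hfun]; exact hs
  have hFapp : ∀ u, fderiv ℝ (fun y => v t ⬝ᵥ (G y *ᵥ v t)) (x t) u
      = ∑ i, ∑ j, (v t i * v t j) * fderiv ℝ (fun y => G y i j) (x t) u := by
    intro u
    rw [hF.fderiv]
    simp [ContinuousLinearMap.sum_apply, ContinuousLinearMap.smul_apply, smul_eq_mul]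
  -- v ⬝ gradient-of-quadratic-form = v ⬝ Gd v  (and dot with the Pi.single expansion)
  have hdotgrad : v t ⬝ᵥ (fun k => fderiv ℝ (fun y => v t ⬝ᵥ (G y *ᵥ v t)) (x t) (Pi.single k 1))
      = v t ⬝ᵥ (Gd *ᵥ v t) := by
    have h1 : v t ⬝ᵥ (fun k => fderiv ℝ (fun y => v t ⬝ᵥ (G y *ᵥ v t)) (x t) (Pi.single k 1))
        = fderiv ℝ (fun y => v t ⬝ᵥ (G y *ᵥ v t)) (x t) (v t) := by
      set φ := fderiv ℝ (fun y => v t ⬝ᵥ (G y *ᵥ v t)) (x t) with hφ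
      have hdecomp : (v t) = ∑ k, (v t k) • (Pi.single k 1 : Fin n → ℝ) := by
        rw [← Finset.univ_sum_single (v t)]
        refine Finset.sum_congr rfl fun k _ => ?_
        ext m; by_cases h : m = k <;> simp [Pi.single, Function.update, h]
      conv_rhs => rw [hdecomp]
      rw [map_sum]
      simp [dotProduct, smul_eq_mul]
    rw [h1, hFapp]
    simp only [dotProduct, mulVec, Finset.mul_sum]
    refine Finset.sum_congr rfl fun i _ => Finset.sum_congr rfl fun j _ => ?_
    have : Gd i j = fderiv ℝ (fun y => G y i j) (x t) (v t) := rfl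
    rw [this]; ring
  -- symmetry of G
  have hGsym : ∀ i j, G (x t) i j = G (x t) j i := fun i j => by
    have := (hGpd (x t)).1.apply j i
    simpa using this
  have hsymdot : a t ⬝ᵥ (G (x t) *ᵥ v t) = v t ⬝ᵥ (G (x t) *ᵥ a t) := by
    simp only [dotProduct, mulVec, Finset.mul_sum]
    rw [Finset.sum_comm]
    refine Finset.sum_congr rfl fun i _ => Finset.sum_congr rfl fun j _ => ?_
    rw [hGsym j i]; ring
  -- dot the dynamics with v
  have hdyn' : v t ⬝ᵥ (G (x t) *ᵥ a t) + v t ⬝ᵥ (Gd *ᵥ v t)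
      - (1 / 2 : ℝ) * (v t ⬝ᵥ (Gd *ᵥ v t))
      = -(v t ⬝ᵥ gradΦ (x t)) - v t ⬝ᵥ (B (x t) (v t) *ᵥ v t) := by
    have h := congrArg (fun w => v t ⬝ᵥ w) (hdyn t)
    simp only [hξ t] at h
    have hGdof : (Matrix.of fun i j => deriv (fun s => G (x s) i j) t) = Gd := by
      ext i j; exact hderivG i j
    rw [hGdof] at h
    simp only [dotProduct_add, dotProduct_sub, dotProduct_neg, dotProduct_smul,
      smul_eq_mul] at h
    rw [hdotgrad] at h
    linarith [h]
  -- assemble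
  have hV : HasDerivAt (fun s => (1 / 2 : ℝ) * (v s ⬝ᵥ (G (x s) *ᵥ v s)) + Φ (x s))
      ((1 / 2 : ℝ) * (a t ⬝ᵥ (G (x t) *ᵥ v t) + v t ⬝ᵥ (Gd *ᵥ v t) + v t ⬝ᵥ (G (x t) *ᵥ a t))
        + gradΦ (x t) ⬝ᵥ v t) t := (hquad.const_mul (1 / 2 : ℝ)).add hPhi
  have hcomm : gradΦ (x t) ⬝ᵥ v t = v t ⬝ᵥ gradΦ (x t) := dotProduct_comm _ _
  have hval : (1 / 2 : ℝ) * (a t ⬝ᵥ (G (x t) *ᵥ v t) + v t ⬝ᵥ (Gd *ᵥ v t) + v t ⬝ᵥ (G (x t) *ᵥ a t))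
        + gradΦ (x t) ⬝ᵥ v t = -(v t ⬝ᵥ (B (x t) (v t) *ᵥ v t)) := by
    rw [hsymdot, hcomm]; linarith [hdyn']
  refine ⟨hval ▸ hV, ?_⟩
  have hpsd := (hB (x t) (v t)).dotProduct_mulVec_nonneg (v t)
  simp only [star_trivial] at hpsd
  simpa using neg_nonpos.2 hpsd
end

section
/- Let w : ℝⁿ → ℝ be differentiable with w(x) > 0, let G : ℝⁿ → Matrix (Fin n) (Fin n) ℝ be a differentiable symmetric-matrix-valued function, and define ξ_G(x,v) = [∂_x g_i(x) v]ᵢ v - (1/2)∇_x(vᵀG(x)v), where g_i is the i-th column of G. Then the curvature term of the scaled metric wG satisfies, for all x and v: ξ_{wG}(x,v) = w(x) ξ_G(x,v) + (vᵀ∇w(x)) G(x) v - (1/2)(vᵀ G(x) v) ∇w(x). -/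
open Matrix

/-- Product rule for the curvature term of a scaled metric `w·G`:
`ξ_{wG}(x,v) = w(x) ξ_G(x,v) + (vᵀ∇w(x)) G(x)v - ½ (vᵀG(x)v) ∇w(x)`. -/
theorem curvature_scaled_metric {n : ℕ}
    (w : (Fin n → ℝ) → ℝ) (hw : Differentiable ℝ w) (hwpos : ∀ y, 0 < w y)
    (G : (Fin n → ℝ) → Matrix (Fin n) (Fin n) ℝ)
    (hGdiff : ∀ i j, Differentiable ℝ (fun y => G y i j))
    (hGsym : ∀ y, (G y).IsSymm)
    -- directional derivative matrix: i-th column is (∂_x g_i(x)) v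
    (Gdot : ((Fin n → ℝ) → Matrix (Fin n) (Fin n) ℝ) → (Fin n → ℝ) → (Fin n → ℝ) →
      Matrix (Fin n) (Fin n) ℝ)
    (hGdot : ∀ H x v, Gdot H x v = Matrix.of fun i j => fderiv ℝ (fun y => H y i j) x v)
    -- gradient operator on scalar functions (componentwise partial derivatives)
    (grad : ((Fin n → ℝ) → ℝ) → (Fin n → ℝ) → (Fin n → ℝ))
    (hgrad : ∀ f x k, grad f x k = fderiv ℝ f x (Pi.single k 1))
    -- curvature term of a metric H
    (ξ : ((Fin n → ℝ) → Matrix (Fin n) (Fin n) ℝ) → (Fin n → ℝ) → (Fin n → ℝ) → (Fin n → ℝ))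
    (hξ : ∀ H x v, ξ H x v =
      Gdot H x v *ᵥ v - (1 / 2 : ℝ) • grad (fun y => v ⬝ᵥ (H y *ᵥ v)) x) :
    ∀ x v : Fin n → ℝ,
      ξ (fun y => w y • G y) x v =
        w x • ξ G x v + (v ⬝ᵥ grad w x) • (G x *ᵥ v)
          - ((1 / 2 : ℝ) * (v ⬝ᵥ (G x *ᵥ v))) • grad w x := by
  intro x v
  have hDw : DifferentiableAt ℝ w x := hw.differentiableAt
  -- product rule for scalar multiplication
  have prod_rule : ∀ (g : (Fin n → ℝ) → ℝ), Differentiable ℝ g → ∀ u,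
      fderiv ℝ (fun y => w y * g y) x u
        = fderiv ℝ w x u * g x + w x * fderiv ℝ g x u := by
    intro g hg u
    rw [fderiv_fun_mul hDw hg.differentiableAt]
    simp [smul_eq_mul]
    ring
  -- linearity: directional derivative as sum of partials
  have hv : (∑ m : Fin n, v m • (Pi.single m 1 : Fin n → ℝ)) = v := by
    funext i
    simp [Finset.sum_apply, Pi.single_apply, mul_ite, Finset.sum_ite_eq']
  have lin : fderiv ℝ w x v = ∑ m : Fin n, v m * fderiv ℝ w x (Pi.single m 1) := by
    conv_lhs => rw [← hv]
    rw [map_sum]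
    simp
  -- the quadratic form
  have hq : ∀ (y : Fin n → ℝ), v ⬝ᵥ (G y *ᵥ v) = ∑ i, ∑ j, v i * (G y i j * v j) := by
    intro y
    simp [dotProduct, mulVec, Finset.mul_sum]
  have hqdiff : Differentiable ℝ (fun y => v ⬝ᵥ (G y *ᵥ v)) := by
    simp only [hq]
    exact Differentiable.fun_sum fun i _ => Differentiable.fun_sum fun j _ =>
      (((hGdiff i j).mul_const (v j)).const_mul (v i))
  have hwq : ∀ (y : Fin n → ℝ), v ⬝ᵥ ((w y • G y) *ᵥ v) = w y * (v ⬝ᵥ (G y *ᵥ v)) := by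
    intro y
    simp [Matrix.smul_mulVec, smul_eq_mul]
  rw [hξ, hξ, hGdot, hGdot]
  have e1 : (fun y => v ⬝ᵥ ((w y • G y) *ᵥ v)) = (fun y => w y * (v ⬝ᵥ (G y *ᵥ v))) :=
    funext hwq
  funext k
  simp only [Pi.sub_apply, Pi.add_apply, Pi.smul_apply, smul_eq_mul, hgrad, e1]
  rw [prod_rule _ hqdiff]
  have hentry : ∀ j, fderiv ℝ (fun y => (w y • G y) k j) x v
      = fderiv ℝ w x v * G x k j + w x * fderiv ℝ (fun y => G y k j) x v := by
    intro j
    simpa [smul_eq_mul] using prod_rule (fun y => G y k j) (hGdiff k j) v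
  simp only [mulVec, dotProduct, Matrix.of_apply, hentry]
  rw [lin]
  simp only [add_mul, Finset.sum_add_distrib, mul_assoc, ← Finset.mul_sum, ← Finset.sum_mul]
  simp only [hgrad]
  ring
end

section
/- Let n ≥ 1, let G ∈ ℝ^{n×n} be a constant symmetric positive definite matrix, B : ℝⁿ × ℝⁿ → ℝ^{n×n} with B(x,v) positive semidefinite for all (x,v), Φ : ℝⁿ → ℝ differentiable, and w : ℝⁿ → ℝ differentiable with w(x) > 0. Define L(x,v) = (1/2)vᵀGv - Φ(x) and the correction term h(x,v) = L(x,v)∇w(x) - (vᵀ∇w(x)) G v. Suppose a twice-differentiable trajectory x(t) satisfies w(x) G ẍ = w(x)(-∇Φ(x) - B(x,ẋ)ẋ) + h(x,ẋ). Then the weighted Lyapunov function V(t) = w(x(t)) [ (1/2)ẋ(t)ᵀGẋ(t) + Φ(x(t)) ] satisfies V̇(t) = -w(x(t)) ẋ(t)ᵀB(x(t),ẋ(t))ẋ(t) ≤ 0. -/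
open Matrix

private lemma hasDerivAt_dot {n : ℕ} {f g : ℝ → Fin n → ℝ} {f' g' : Fin n → ℝ} {t : ℝ}
    (hf : HasDerivAt f f' t) (hg : HasDerivAt g g' t) :
    HasDerivAt (fun s => f s ⬝ᵥ g s) (f' ⬝ᵥ g t + f t ⬝ᵥ g') t := by
  simp only [dotProduct]
  rw [← Finset.sum_add_distrib]
  exact HasDerivAt.fun_sum fun i _ => (hasDerivAt_pi.mp hf i).mul (hasDerivAt_pi.mp hg i)

/-- Single-node RMPfusion stability: for a child GDS with constant metric `G`,
damping `B`, potential `Φ`, fused with a positive weight function `w` via the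
correction force `h = L∇w - (ẋᵀ∇w)Gẋ` with `L = ½ẋᵀGẋ - Φ`, the reshaped
energy `V = w(x)(½ẋᵀGẋ + Φ(x))` satisfies `V̇ = -w(x) ẋᵀBẋ ≤ 0`. -/
theorem rmpfusion_single_node_stability {n : ℕ} (hn : 1 ≤ n)
    (G : Matrix (Fin n) (Fin n) ℝ) (hG : G.PosDef)
    (B : (Fin n → ℝ) → (Fin n → ℝ) → Matrix (Fin n) (Fin n) ℝ)
    (hB : ∀ y u, (B y u).PosSemidef)
    (Φ w : (Fin n → ℝ) → ℝ)
    (gradΦ gradw : (Fin n → ℝ) → (Fin n → ℝ))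
    (hΦ : Differentiable ℝ Φ)
    (hgradΦ : ∀ y u, fderiv ℝ Φ y u = gradΦ y ⬝ᵥ u)
    (hw : Differentiable ℝ w)
    (hgradw : ∀ y u, fderiv ℝ w y u = gradw y ⬝ᵥ u)
    (hwpos : ∀ y, 0 < w y)
    (x v a : ℝ → (Fin n → ℝ))
    (hx : ∀ t, HasDerivAt x (v t) t)
    (hv : ∀ t, HasDerivAt v (a t) t)
    -- dynamics: w(x) G ẍ = w(x)(-∇Φ(x) - B(x,ẋ)ẋ) + h(x,ẋ),
    -- with h(x,v) = L(x,v)∇w(x) - (vᵀ∇w(x)) G v and L(x,v) = ½vᵀGv - Φ(x)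
    (hdyn : ∀ t,
      w (x t) • (G *ᵥ a t) =
        w (x t) • (-(gradΦ (x t)) - B (x t) (v t) *ᵥ v t)
          + (((1 / 2 : ℝ) * (v t ⬝ᵥ (G *ᵥ v t)) - Φ (x t)) • gradw (x t)
              - (v t ⬝ᵥ gradw (x t)) • (G *ᵥ v t))) :
    ∀ t,
      HasDerivAt
        (fun s => w (x s) * ((1 / 2 : ℝ) * (v s ⬝ᵥ (G *ᵥ v s)) + Φ (x s)))
        (-(w (x t) * (v t ⬝ᵥ (B (x t) (v t) *ᵥ v t)))) t
      ∧ -(w (x t) * (v t ⬝ᵥ (B (x t) (v t) *ᵥ v t))) ≤ 0 := by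
  have hsym : Gᵀ = G := by simpa using hG.isHermitian.eq
  intro t
  constructor
  · have hwx : HasDerivAt (fun s => w (x s)) (gradw (x t) ⬝ᵥ v t) t := by
      have := ((hw (x t)).hasFDerivAt).comp_hasDerivAt t (hx t)
      simpa [Function.comp_def, hgradw] using this
    have hΦx : HasDerivAt (fun s => Φ (x s)) (gradΦ (x t) ⬝ᵥ v t) t := by
      have := ((hΦ (x t)).hasFDerivAt).comp_hasDerivAt t (hx t)
      simpa [Function.comp_def, hgradΦ] using this
    have hGv : HasDerivAt (fun s => G *ᵥ v s) (G *ᵥ a t) t := by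
      rw [hasDerivAt_pi]
      intro i
      simp only [mulVec, dotProduct]
      exact HasDerivAt.fun_sum fun j _ => (hasDerivAt_pi.mp (hv t) j).const_mul (G i j)
    have hK : HasDerivAt (fun s => v s ⬝ᵥ (G *ᵥ v s))
        (a t ⬝ᵥ (G *ᵥ v t) + v t ⬝ᵥ (G *ᵥ a t)) t := hasDerivAt_dot (hv t) hGv
    have hD := hwx.fun_mul ((hK.const_mul ((1:ℝ)/2)).fun_add hΦx)
    have haGv : a t ⬝ᵥ (G *ᵥ v t) = v t ⬝ᵥ (G *ᵥ a t) := by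
      rw [Matrix.dotProduct_mulVec, ← Matrix.mulVec_transpose, hsym, dotProduct_comm]
    have hdd := congrArg (fun u => v t ⬝ᵥ u) (hdyn t)
    simp only [dotProduct_add, dotProduct_sub, dotProduct_smul, dotProduct_neg,
      smul_eq_mul, dotProduct_sub, dotProduct_neg] at hdd
    have heq : gradw (x t) ⬝ᵥ v t * ((1:ℝ)/2 * (v t ⬝ᵥ (G *ᵥ v t)) + Φ (x t))
        + w (x t) * ((1:ℝ)/2 * (a t ⬝ᵥ (G *ᵥ v t) + v t ⬝ᵥ (G *ᵥ a t)) + gradΦ (x t) ⬝ᵥ v t)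
        = -(w (x t) * (v t ⬝ᵥ (B (x t) (v t) *ᵥ v t))) := by
      rw [haGv, dotProduct_comm (gradw (x t)), dotProduct_comm (gradΦ (x t))]
      linear_combination hdd
    rw [heq] at hD
    exact hD
  · have h1 : 0 ≤ v t ⬝ᵥ (B (x t) (v t) *ᵥ v t) := by
      have := (hB (x t) (v t)).dotProduct_mulVec_nonneg (v t); simpa using this
    have := mul_nonneg (hwpos (x t)).le h1
    linarith
end

section
/- Under the setting of a two-child weighted pullback: let G₁, G₂ ∈ ℝ^{n×n} be constant symmetric positive semidefinite, Φ₁, Φ₂ : ℝⁿ → ℝ differentiable, B₁, B₂ : ℝⁿ × ℝⁿ → ℝ^{n×n} positive-semidefinite-valued, and w₁, w₂ : ℝⁿ → ℝ differentiable with wᵢ(x) > 0. Define Lᵢ(x,v) = (1/2)vᵀGᵢv - Φᵢ(x), hᵢ(x,v) = Lᵢ(x,v)∇wᵢ(x) - (vᵀ∇wᵢ(x))Gᵢv, M(x) = w₁(x)G₁ + w₂(x)G₂, and fᵢ(x,v) = -∇Φᵢ(x) - Bᵢ(x,v)v. Suppose a trajectory x(t) satisfies M(x)ẍ = w₁(x)f₁(x,ẋ)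 + h₁(x,ẋ) + w₂(x)f₂(x,ẋ) + h₂(x,ẋ). Then V(t) = Σᵢ wᵢ(x(t))[(1/2)ẋᵀGᵢẋ + Φᵢ(x)] satisfies V̇(t) = -ẋᵀ(w₁(x)B₁(x,ẋ) + w₂(x)B₂(x,ẋ))ẋ ≤ 0. -/
open Matrix

/-- Two-child weighted pullback (Y-shaped RMP-tree* with identity transformations):
if `(w₁G₁+w₂G₂)ẍ = w₁f₁ + h₁ + w₂f₂ + h₂` with `fᵢ = -∇Φᵢ - Bᵢẋ`,
`hᵢ = Lᵢ∇wᵢ - (ẋᵀ∇wᵢ)Gᵢẋ`, `Lᵢ = ½ẋᵀGᵢẋ - Φᵢ`, then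
`V = Σᵢ wᵢ(x)(½ẋᵀGᵢẋ + Φᵢ(x))` satisfies `V̇ = -ẋᵀ(w₁B₁+w₂B₂)ẋ ≤ 0`. -/
theorem rmpfusion_two_child_stability {n : ℕ}
    (G₁ G₂ : Matrix (Fin n) (Fin n) ℝ)
    (hG₁ : G₁.PosSemidef) (hG₂ : G₂.PosSemidef)
    (B₁ B₂ : (Fin n → ℝ) → (Fin n → ℝ) → Matrix (Fin n) (Fin n) ℝ)
    (hB₁ : ∀ y u, (B₁ y u).PosSemidef) (hB₂ : ∀ y u, (B₂ y u).PosSemidef)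
    (Φ₁ Φ₂ w₁ w₂ : (Fin n → ℝ) → ℝ)
    (gradΦ₁ gradΦ₂ gradw₁ gradw₂ : (Fin n → ℝ) → (Fin n → ℝ))
    (hΦ₁ : Differentiable ℝ Φ₁) (hΦ₂ : Differentiable ℝ Φ₂)
    (hgradΦ₁ : ∀ y u, fderiv ℝ Φ₁ y u = gradΦ₁ y ⬝ᵥ u)
    (hgradΦ₂ : ∀ y u, fderiv ℝ Φ₂ y u = gradΦ₂ y ⬝ᵥ u)
    (hw₁ : Differentiable ℝ w₁) (hw₂ : Differentiable ℝ w₂)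
    (hgradw₁ : ∀ y u, fderiv ℝ w₁ y u = gradw₁ y ⬝ᵥ u)
    (hgradw₂ : ∀ y u, fderiv ℝ w₂ y u = gradw₂ y ⬝ᵥ u)
    (hw₁pos : ∀ y, 0 < w₁ y) (hw₂pos : ∀ y, 0 < w₂ y)
    (x v a : ℝ → (Fin n → ℝ))
    (hx : ∀ t, HasDerivAt x (v t) t)
    (hv : ∀ t, HasDerivAt v (a t) t)
    (hdyn : ∀ t,
      (w₁ (x t) • G₁ + w₂ (x t) • G₂) *ᵥ a t =
        w₁ (x t) • (-(gradΦ₁ (x t)) - B₁ (x t) (v t) *ᵥ v t)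
          + (((1 / 2 : ℝ) * (v t ⬝ᵥ (G₁ *ᵥ v t)) - Φ₁ (x t)) • gradw₁ (x t)
              - (v t ⬝ᵥ gradw₁ (x t)) • (G₁ *ᵥ v t))
          + w₂ (x t) • (-(gradΦ₂ (x t)) - B₂ (x t) (v t) *ᵥ v t)
          + (((1 / 2 : ℝ) * (v t ⬝ᵥ (G₂ *ᵥ v t)) - Φ₂ (x t)) • gradw₂ (x t)
              - (v t ⬝ᵥ gradw₂ (x t)) • (G₂ *ᵥ v t))) :
    ∀ t,
      HasDerivAt
        (fun s =>
          w₁ (x s) * ((1 / 2 : ℝ) * (v s ⬝ᵥ (G₁ *ᵥ v s)) + Φ₁ (x s))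
            + w₂ (x s) * ((1 / 2 : ℝ) * (v s ⬝ᵥ (G₂ *ᵥ v s)) + Φ₂ (x s)))
        (-(v t ⬝ᵥ ((w₁ (x t) • B₁ (x t) (v t) + w₂ (x t) • B₂ (x t) (v t)) *ᵥ v t))) t
      ∧ -(v t ⬝ᵥ ((w₁ (x t) • B₁ (x t) (v t) + w₂ (x t) • B₂ (x t) (v t)) *ᵥ v t)) ≤ 0 := by
  
  intro t
  -- component derivatives of v
  have hvi : ∀ i, HasDerivAt (fun s => v s i) (a t i) t :=
    fun i => (hasDerivAt_pi.mp (hv t)) i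
  -- derivative of quadratic forms
  have hquad : ∀ (G : Matrix (Fin n) (Fin n) ℝ),
      HasDerivAt (fun s => v s ⬝ᵥ (G *ᵥ v s))
        (a t ⬝ᵥ (G *ᵥ v t) + v t ⬝ᵥ (G *ᵥ a t)) t := by
    intro G
    have hfun : (fun s => v s ⬝ᵥ (G *ᵥ v s))
        = fun s => ∑ i, ∑ j, v s i * (G i j * v s j) := by
      funext s; simp [dotProduct, mulVec, Finset.mul_sum]
    have h : HasDerivAt (fun s => ∑ i, ∑ j, v s i * (G i j * v s j))
        (∑ i, ∑ j, (a t i * (G i j * v t j) + v t i * (G i j * a t j))) t := by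
      refine HasDerivAt.fun_sum fun i _ => HasDerivAt.fun_sum fun j _ => ?_
      exact (hvi i).mul ((hvi j).const_mul (G i j))
    rw [hfun]
    convert h using 1
    simp [dotProduct, mulVec, Finset.mul_sum, Finset.sum_add_distrib]
  -- derivatives of scalar compositions
  have hcomp : ∀ (f : (Fin n → ℝ) → ℝ) (gradf : (Fin n → ℝ) → (Fin n → ℝ)),
      Differentiable ℝ f → (∀ y u, fderiv ℝ f y u = gradf y ⬝ᵥ u) →
      HasDerivAt (fun s => f (x s)) (gradf (x t) ⬝ᵥ v t) t := by
    intro f gradf hf hgrad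
    have := ((hf (x t)).hasFDerivAt).comp_hasDerivAt t (hx t)
    rw [hgrad (x t) (v t)] at this
    exact this
  have hw1d := hcomp w₁ gradw₁ hw₁ hgradw₁
  have hw2d := hcomp w₂ gradw₂ hw₂ hgradw₂
  have hp1d := hcomp Φ₁ gradΦ₁ hΦ₁ hgradΦ₁
  have hp2d := hcomp Φ₂ gradΦ₂ hΦ₂ hgradΦ₂
  -- symmetry of G₁, G₂
  have hsym : ∀ (G : Matrix (Fin n) (Fin n) ℝ), G.IsHermitian →
      ∀ (u w : Fin n → ℝ), u ⬝ᵥ (G *ᵥ w) = w ⬝ᵥ (G *ᵥ u) := by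
    intro G hG u w
    have hGe : ∀ i j, G i j = G j i := by
      intro i j
      have := hG.apply j i
      simpa using this
    simp only [dotProduct, mulVec, Finset.mul_sum]
    rw [Finset.sum_comm]
    refine Finset.sum_congr rfl fun i _ => Finset.sum_congr rfl fun j _ => ?_
    rw [hGe j i]; ring
  have hs1 := hsym G₁ hG₁.1 (a t) (v t)
  have hs2 := hsym G₂ hG₂.1 (a t) (v t)
  -- raw derivative of V
  set K₁ := v t ⬝ᵥ (G₁ *ᵥ v t) with hK₁
  set K₂ := v t ⬝ᵥ (G₂ *ᵥ v t) with hK₂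
  set P₁ := v t ⬝ᵥ (G₁ *ᵥ a t) with hP₁
  set P₂ := v t ⬝ᵥ (G₂ *ᵥ a t) with hP₂
  have hq1 : HasDerivAt (fun s => v s ⬝ᵥ (G₁ *ᵥ v s)) (P₁ + P₁) t := by
    have := hquad G₁; rwa [hs1] at this
  have hq2 : HasDerivAt (fun s => v s ⬝ᵥ (G₂ *ᵥ v s)) (P₂ + P₂) t := by
    have := hquad G₂; rwa [hs2] at this
  have hV : HasDerivAt
      (fun s =>
          w₁ (x s) * ((1 / 2 : ℝ) * (v s ⬝ᵥ (G₁ *ᵥ v s)) + Φ₁ (x s))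
            + w₂ (x s) * ((1 / 2 : ℝ) * (v s ⬝ᵥ (G₂ *ᵥ v s)) + Φ₂ (x s)))
      ((gradw₁ (x t) ⬝ᵥ v t) * ((1 / 2 : ℝ) * K₁ + Φ₁ (x t))
          + w₁ (x t) * ((1 / 2 : ℝ) * (P₁ + P₁) + gradΦ₁ (x t) ⬝ᵥ v t)
        + ((gradw₂ (x t) ⬝ᵥ v t) * ((1 / 2 : ℝ) * K₂ + Φ₂ (x t))
          + w₂ (x t) * ((1 / 2 : ℝ) * (P₂ + P₂) + gradΦ₂ (x t) ⬝ᵥ v t))) t := by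
    exact (hw1d.mul ((hq1.const_mul (1/2 : ℝ)).add hp1d)).add
      (hw2d.mul ((hq2.const_mul (1/2 : ℝ)).add hp2d))
  -- use the dynamics
  have hkey := congrArg (fun u => v t ⬝ᵥ u) (hdyn t)
  simp only [add_mulVec, smul_mulVec, dotProduct_add, dotProduct_smul,
    dotProduct_sub, dotProduct_neg, smul_eq_mul, ← hK₁, ← hK₂, ← hP₁, ← hP₂] at hkey
  -- the derivative equals the claimed value
  have hderiv_eq :
      (gradw₁ (x t) ⬝ᵥ v t) * ((1 / 2 : ℝ) * K₁ + Φ₁ (x t))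
          + w₁ (x t) * ((1 / 2 : ℝ) * (P₁ + P₁) + gradΦ₁ (x t) ⬝ᵥ v t)
        + ((gradw₂ (x t) ⬝ᵥ v t) * ((1 / 2 : ℝ) * K₂ + Φ₂ (x t))
          + w₂ (x t) * ((1 / 2 : ℝ) * (P₂ + P₂) + gradΦ₂ (x t) ⬝ᵥ v t))
      = -(v t ⬝ᵥ ((w₁ (x t) • B₁ (x t) (v t) + w₂ (x t) • B₂ (x t) (v t)) *ᵥ v t)) := by
    have hc1 : gradw₁ (x t) ⬝ᵥ v t = v t ⬝ᵥ gradw₁ (x t) := dotProduct_comm _ _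
    have hc2 : gradw₂ (x t) ⬝ᵥ v t = v t ⬝ᵥ gradw₂ (x t) := dotProduct_comm _ _
    have hc3 : gradΦ₁ (x t) ⬝ᵥ v t = v t ⬝ᵥ gradΦ₁ (x t) := dotProduct_comm _ _
    have hc4 : gradΦ₂ (x t) ⬝ᵥ v t = v t ⬝ᵥ gradΦ₂ (x t) := dotProduct_comm _ _
    simp only [add_mulVec, smul_mulVec, dotProduct_add, dotProduct_smul,
      smul_eq_mul, hc1, hc2, hc3, hc4]
    linarith [hkey]
  rw [hderiv_eq] at hV
  refine ⟨hV, ?_⟩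
  -- nonnegativity
  have hb1 : 0 ≤ v t ⬝ᵥ (B₁ (x t) (v t) *ᵥ v t) := by
    have := (hB₁ (x t) (v t)).dotProduct_mulVec_nonneg (v t); simpa using this
  have hb2 : 0 ≤ v t ⬝ᵥ (B₂ (x t) (v t) *ᵥ v t) := by
    have := (hB₂ (x t) (v t)).dotProduct_mulVec_nonneg (v t); simpa using this
  have h1 := (hw₁pos (x t)).le
  have h2 := (hw₂pos (x t)).le
  simp only [add_mulVec, smul_mulVec, dotProduct_add, dotProduct_smul, smul_eq_mul]
  nlinarith
end
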